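/- Assume (1+θ)·∫_{(0,∞)} z dμ_F̂(z) < ∞. Then for every a > 0 the infimum defining v(a) is attained: there exists H* ∈ 𝒜 such that J_a(H*) ≤ J_a(H) for all H ∈ 𝒜, i.e., J_a(H*) = v(a). -/

import Mathlib

open MeasureTheory Set Filter Topology
open scoped ENNReal

noncomputable section

/-- The admissible set 𝒜: functions `H : [0,∞) → [0,∞)` with `H 0 = 0` that are
nondecreasing and 1-Lipschitz (extended to `ℝ`, with the conditions imposed on `[0,∞)`). -/
def Adm : Set (ℝ → ℝ) :=
  {H | H 0 = 0 ∧ (∀ z, 0 ≤ z → 0 ≤ H z) ∧ MonotoneOn H (Set.Ici 0) ∧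
    LipschitzOnWith 1 H (Set.Ici 0)}

/-- The objective functional
`J_a(H) = ∫_{(0,∞)} ((a/2)·H² + H) dμ_F − (1+θ)·∫_{(0,∞)} H dμ_F̂`, valued in `EReal`. -/
def Jfun (μF μFhat : Measure ℝ) (θ a : ℝ) (H : ℝ → ℝ) : EReal :=
  ((∫⁻ z in Set.Ioi (0:ℝ), ENNReal.ofReal (a / 2 * H z ^ 2 + H z) ∂μF : ℝ≥0∞) : EReal)
    - ((ENNReal.ofReal (1 + θ) * ∫⁻ z in Set.Ioi (0:ℝ), ENNReal.ofReal (H z) ∂μFhat : ℝ≥0∞) : EReal)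

/-- `v(a) = inf_{H ∈ 𝒜} J_a(H)`. -/
def vfun (μF μFhat : Measure ℝ) (θ : ℝ) (a : ℝ) : EReal :=
  ⨅ H ∈ Adm, Jfun μF μFhat θ a H

lemma adm_le {H : ℝ → ℝ} (hH : H ∈ Adm) {z : ℝ} (hz : 0 ≤ z) : H z ≤ z := by
  obtain ⟨h0, hnn, hmono, hlip⟩ := hH
  have := (lipschitzOnWith_iff_dist_le_mul.1 hlip) z hz 0 (Set.self_mem_Ici)
  rw [h0] at this
  simp only [Real.dist_eq, sub_zero, NNReal.coe_one, one_mul] at this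
  calc H z ≤ |H z| := le_abs_self _
    _ ≤ |z| := this
    _ = z := abs_of_nonneg hz

def trunc (H : ℝ → ℝ) : ℝ → ℝ := fun z => if z < 0 then 0 else H z

lemma trunc_eq {H : ℝ → ℝ} {z : ℝ} (hz : 0 ≤ z) : trunc H z = H z := by
  simp [trunc, not_lt.2 hz]

lemma trunc_mem {H : ℝ → ℝ} (hH : H ∈ Adm) : trunc H ∈ Adm := by
  obtain ⟨h0, hnn, hmono, hlip⟩ := hH
  refine ⟨by simpa [trunc_eq le_rfl] using h0, fun z hz => by rw [trunc_eq hz]; exact hnn z hz,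
    fun x hx y hy hxy => ?_, fun x hx y hy => ?_⟩
  · rw [trunc_eq hx, trunc_eq hy]; exact hmono hx hy hxy
  · rw [show trunc H x = H x from trunc_eq hx, show trunc H y = H y from trunc_eq hy]
    exact hlip hx hy

lemma trunc_lipschitz {H : ℝ → ℝ} (hH : H ∈ Adm) : LipschitzWith 1 (trunc H) := by
  obtain ⟨h0, hnn, hmono, hlip⟩ := hH
  have key : ∀ x y : ℝ, x ≤ y → dist (trunc H x) (trunc H y) ≤ dist x y := by
    intro x y hxy
    rcases lt_or_ge x 0 with hx | hx
    · rcases lt_or_ge y 0 with hy | hy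
      · simp [trunc, hx, hy, dist_nonneg]
      · have h1 : trunc H x = 0 := by simp [trunc, hx]
        have h2 : trunc H y = H y := trunc_eq hy
        rw [h1, h2, Real.dist_eq, Real.dist_eq]
        rw [abs_of_nonpos (by linarith [hnn y hy]), neg_sub]
        have : H y ≤ y := adm_le ⟨h0, hnn, hmono, hlip⟩ hy
        rw [abs_of_nonpos (by linarith)]
        linarith
    · have hy : (0:ℝ) ≤ y := le_trans hx hxy
      rw [trunc_eq hx, trunc_eq hy]
      have := (lipschitzOnWith_iff_dist_le_mul.1 hlip) x hx y hy
      simpa using this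
  apply LipschitzWith.of_dist_le_mul
  intro x y
  rcases le_total x y with h | h
  · simpa using key x y h
  · rw [dist_comm, dist_comm x y]; simpa using key y x h

lemma trunc_nonneg {H : ℝ → ℝ} (hH : H ∈ Adm) (z : ℝ) : 0 ≤ trunc H z := by
  rcases lt_or_ge z 0 with hz | hz
  · simp [trunc, hz]
  · rw [trunc_eq hz]; exact hH.2.1 z hz

lemma trunc_le_max {H : ℝ → ℝ} (hH : H ∈ Adm) (z : ℝ) : trunc H z ≤ max z 0 := by
  rcases lt_or_ge z 0 with hz | hz
  · simp [trunc, hz]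
  · rw [trunc_eq hz]; exact le_trans (adm_le hH hz) (le_max_left _ _)

lemma Jfun_congr (μF μFhat : Measure ℝ) (θ a : ℝ) {H G : ℝ → ℝ}
    (h : ∀ z ∈ Set.Ioi (0:ℝ), H z = G z) :
    Jfun μF μFhat θ a H = Jfun μF μFhat θ a G := by
  unfold Jfun
  rw [setLIntegral_congr_fun measurableSet_Ioi
    (fun z hz => by rw [h z hz]),
    setLIntegral_congr_fun (μ := μFhat) measurableSet_Ioi
    (fun z hz => by rw [h z hz])]

lemma zero_mem_Adm : (fun _ : ℝ => (0:ℝ)) ∈ Adm :=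
  ⟨rfl, fun _ _ => le_rfl, fun _ _ _ _ _ => le_rfl,
    LipschitzWith.lipschitzOnWith ((LipschitzWith.const 0).weaken (by norm_num))⟩

lemma Jfun_zero (μF μFhat : Measure ℝ) (θ a : ℝ) :
    Jfun μF μFhat θ a (fun _ => (0:ℝ)) = 0 := by
  unfold Jfun
  simp

lemma ereal_coe_ennreal_eq {x : ℝ≥0∞} (hx : x ≠ ⊤) :
    ((x : EReal)) = ((x.toReal : ℝ) : EReal) := by
  conv_lhs => rw [← ENNReal.ofReal_toReal hx]
  rw [EReal.coe_ennreal_ofReal, max_eq_left ENNReal.toReal_nonneg]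

lemma ereal_sub_coe {x y : ℝ≥0∞} (hx : x ≠ ⊤) (hy : y ≠ ⊤) :
    (x : EReal) - (y : EReal) = ((x.toReal - y.toReal : ℝ) : EReal) := by
  rw [ereal_coe_ennreal_eq hx, ereal_coe_ennreal_eq hy, ← EReal.coe_sub]

/-- for every a > 0 the infimum defining v(a) is attained on 𝒜. -/
theorem stmt_7
    (F Fhat : StieltjesFunction ℝ) (g : ℝ → ℝ) (θ0 θ : ℝ)
    (hF_neg : ∀ z : ℝ, z < 0 → F z = 0)
    (hF_top : Tendsto (fun z => F z) atTop (nhds 1))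
    (hg_mono : MonotoneOn g (Set.Icc 0 1))
    (hg_left : ∀ p ∈ Set.Ioc (0:ℝ) 1, Tendsto g (nhdsWithin p (Set.Iio p)) (nhds (g p)))
    (hg_zero : g 0 = 0)
    (hg_zero' : Tendsto g (nhdsWithin 0 (Set.Ioi 0)) (nhds 0))
    (hg_one : g 1 = 1)
    (hg_pos : 0 < g (1 - F 0))
    (hθ0 : -1 < θ0)
    (hθ : θ = (1 + θ0) * g (1 - F 0) - 1)
    (hFhat : ∀ z : ℝ, Fhat z = if z < 0 then 0 else 1 - g (1 - F z) / g (1 - F 0))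
    (hFhat_top : Tendsto (fun z => Fhat z) atTop (nhds 1))
    (hfin : ENNReal.ofReal (1 + θ) *
        (∫⁻ z in Set.Ioi (0:ℝ), ENNReal.ofReal z ∂Fhat.measure) < ⊤) :
    ∀ a ∈ Set.Ioi (0:ℝ), ∃ Hstar ∈ Adm,
      Jfun F.measure Fhat.measure θ a Hstar = vfun F.measure Fhat.measure θ a ∧
      ∀ H ∈ Adm, Jfun F.measure Fhat.measure θ a Hstar ≤
        Jfun F.measure Fhat.measure θ a H := by
  intro a ha
  -- basic positivity
  have hθpos : 0 < 1 + θ := by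
    have h1 : 0 < 1 + θ0 := by linarith
    have := mul_pos h1 hg_pos
    rw [hθ]; linarith
  set c : ℝ≥0∞ := ENNReal.ofReal (1 + θ) with hc
  set M : ℝ≥0∞ := ∫⁻ z in Set.Ioi (0:ℝ), ENNReal.ofReal z ∂Fhat.measure with hM
  have hcM : c * M ≠ ⊤ := hfin.ne
  have hc0 : c ≠ 0 := by
    simp [hc, ENNReal.ofReal_eq_zero, not_le, hθpos]
  have hMne : M ≠ ⊤ := by
    intro h
    rw [h, ENNReal.mul_top hc0] at hcM
    exact hcM rfl
  set A : (ℝ → ℝ) → ℝ≥0∞ :=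
    fun H => ∫⁻ z in Set.Ioi (0:ℝ), ENNReal.ofReal (a / 2 * H z ^ 2 + H z) ∂F.measure with hA
  set Bf : (ℝ → ℝ) → ℝ≥0∞ :=
    fun H => c * ∫⁻ z in Set.Ioi (0:ℝ), ENNReal.ofReal (H z) ∂Fhat.measure with hB
  have hJ : ∀ H, Jfun F.measure Fhat.measure θ a H = (A H : EReal) - (Bf H : EReal) :=
    fun H => rfl
  have hBle : ∀ H ∈ Adm, Bf H ≤ c * M := by
    intro H hH
    refine mul_le_mul_right (lintegral_mono_ae ?_) c
    rw [ae_restrict_iff' measurableSet_Ioi]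
    exact ae_of_all _ fun z hz => ENNReal.ofReal_le_ofReal (adm_le hH (le_of_lt hz))
  have hBne : ∀ H ∈ Adm, Bf H ≠ ⊤ := fun H hH => ne_top_of_le_ne_top hcM (hBle H hH)
  set v : EReal := vfun F.measure Fhat.measure θ a with hv
  have hv_le : v ≤ 0 := by
    rw [hv, vfun]
    refine le_trans (iInf₂_le (fun _ : ℝ => (0:ℝ)) zero_mem_Adm) ?_
    rw [Jfun_zero]
  have hv_ge : -((c * M : ℝ≥0∞) : EReal) ≤ v := by
    rw [hv, vfun]
    refine le_iInf₂ fun H hH => ?_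
    rw [hJ]
    calc -((c * M : ℝ≥0∞) : EReal) = 0 - ((c * M : ℝ≥0∞) : EReal) := by
          simp
      _ ≤ (A H : EReal) - (Bf H : EReal) :=
          EReal.sub_le_sub (EReal.coe_ennreal_nonneg _)
            (EReal.coe_ennreal_le_coe_ennreal_iff.2 (hBle H hH))
  have hv_ne_top : v ≠ ⊤ := ne_top_of_le_ne_top (by simp) hv_le
  have hv_ne_bot : v ≠ ⊥ := by
    intro h
    rw [h, le_bot_iff] at hv_ge
    have : ((c * M : ℝ≥0∞) : EReal) = ⊤ := by
      rw [← EReal.neg_eq_bot_iff]; exact hv_ge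
    exact hcM (EReal.coe_ennreal_eq_top_iff.1 this)
  set vr : ℝ := v.toReal with hvrdef
  have hvr : (vr : EReal) = v := EReal.coe_toReal hv_ne_top hv_ne_bot
  -- minimizing sequence
  have hseq : ∀ n : ℕ, ∃ H, H ∈ Adm ∧
      Jfun F.measure Fhat.measure θ a H < ((vr + 1 / (n + 1) : ℝ) : EReal) := by
    intro n
    have hlt : v < ((vr + 1 / (n + 1) : ℝ) : EReal) := by
      rw [← hvr]
      have hp : (0:ℝ) < 1 / ((n : ℝ) + 1) := by positivity
      exact_mod_cast (by linarith : vr < vr + 1 / ((n : ℝ) + 1))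
    rw [hv, vfun] at hlt
    simp only [iInf_lt_iff] at hlt
    obtain ⟨H, hH, hJH⟩ := hlt
    exact ⟨H, hH, hJH⟩
  choose H0 hH0mem hH0lt using hseq
  set G : ℕ → ℝ → ℝ := fun n => trunc (H0 n) with hGdef
  have hGmem : ∀ n, G n ∈ Adm := fun n => trunc_mem (hH0mem n)
  have hGlip : ∀ n, LipschitzWith 1 (G n) := fun n => trunc_lipschitz (hH0mem n)
  have hGJ : ∀ n, Jfun F.measure Fhat.measure θ a (G n) =
      Jfun F.measure Fhat.measure θ a (H0 n) :=
    fun n => Jfun_congr _ _ _ _ fun z hz => trunc_eq (le_of_lt hz)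
  -- compactness on rationals
  set x : ℕ → (ℚ → ℝ) := fun n q => G n q with hxdef
  have hK : IsCompact (Set.pi (Set.univ : Set ℚ) fun q : ℚ => Set.Icc (0:ℝ) (max (q:ℝ) 0)) :=
    isCompact_univ_pi fun q => isCompact_Icc
  have hxmem : ∀ n, x n ∈ Set.pi Set.univ fun q : ℚ => Set.Icc (0:ℝ) (max (q:ℝ) 0) := by
    intro n
    rw [Set.mem_univ_pi]
    exact fun q => ⟨trunc_nonneg (hH0mem n) _, trunc_le_max (hH0mem n) _⟩
  obtain ⟨f, -, φ, hφ, hconvQ⟩ := hK.tendsto_subseq hxmem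
  have hconvQ' : ∀ q : ℚ, Tendsto (fun n => G (φ n) q) atTop (𝓝 (f q)) := by
    intro q
    exact (continuous_apply q).continuousAt.tendsto.comp hconvQ
  -- Cauchy at every real point
  have hcauchy : ∀ z : ℝ, CauchySeq (fun n => G (φ n) z) := by
    intro z
    rw [Metric.cauchySeq_iff]
    intro ε hε
    obtain ⟨q, hq1, hq2⟩ := exists_rat_btwn (show z < z + ε / 4 by linarith)
    have hqc : CauchySeq (fun n => G (φ n) q) := (hconvQ' q).cauchySeq
    rw [Metric.cauchySeq_iff] at hqc
    obtain ⟨N, hN⟩ := hqc (ε / 2) (by linarith)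
    refine ⟨N, fun m hm k hk => ?_⟩
    have hdzq : dist z (q : ℝ) < ε / 4 := by
      rw [Real.dist_eq, abs_of_nonpos (by linarith)]
      linarith
    calc dist (G (φ m) z) (G (φ k) z)
        ≤ dist (G (φ m) z) (G (φ m) q) + dist (G (φ m) q) (G (φ k) q)
            + dist (G (φ k) q) (G (φ k) z) := dist_triangle4 _ _ _ _
      _ < ε / 4 + ε / 2 + ε / 4 := by
          refine add_lt_add (add_lt_add ?_ (hN m hm k hk)) ?_
          · exact lt_of_le_of_lt (by simpa using (hGlip (φ m)).dist_le_mul z q) hdzq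
          · refine lt_of_le_of_lt (by simpa using (hGlip (φ k)).dist_le_mul (q:ℝ) z) ?_
            rwa [dist_comm]
      _ = ε := by ring
  set Hs : ℝ → ℝ := fun z => limUnder atTop (fun n => G (φ n) z) with hHsdef
  have hconv : ∀ z : ℝ, Tendsto (fun n => G (φ n) z) atTop (𝓝 (Hs z)) :=
    fun z => (hcauchy z).tendsto_limUnder
  -- Hs is admissible
  have hHs0 : Hs 0 = 0 := by
    refine tendsto_nhds_unique (hconv 0) ?_
    have heq : ∀ n, G (φ n) 0 = 0 := fun n => (trunc_eq le_rfl).trans (hH0mem (φ n)).1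
    simp only [heq]
    exact tendsto_const_nhds
  have hHs_nonneg : ∀ z, 0 ≤ z → 0 ≤ Hs z := by
    intro z hz
    exact ge_of_tendsto (hconv z) (Eventually.of_forall fun n => (hGmem (φ n)).2.1 z hz)
  have hHs_mono : MonotoneOn Hs (Set.Ici 0) := by
    intro z hz y hy hzy
    exact le_of_tendsto_of_tendsto' (hconv z) (hconv y)
      (fun n => (hGmem (φ n)).2.2.1 hz hy hzy)
  have hHs_lip : LipschitzWith 1 Hs := by
    apply LipschitzWith.of_dist_le_mul
    intro z y
    rw [NNReal.coe_one, one_mul]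
    refine le_of_tendsto ((hconv z).dist (hconv y)) ?_
    exact Eventually.of_forall fun n => by simpa using (hGlip (φ n)).dist_le_mul z y
  have hHsAdm : Hs ∈ Adm := ⟨hHs0, hHs_nonneg, hHs_mono, hHs_lip.lipschitzOnWith⟩
  -- extract further subsequence along which A converges
  obtain ⟨L, ψ, hψ, hAL⟩ := SeqCompactSpace.tendsto_subseq (fun n => A (G (φ n)))
  set ρ : ℕ → ℕ := fun n => φ (ψ n) with hρdef
  have hconvρ : ∀ z : ℝ, Tendsto (fun n => G (ρ n) z) atTop (𝓝 (Hs z)) :=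
    fun z => (hconv z).comp hψ.tendsto_atTop
  have hALρ : Tendsto (fun n => A (G (ρ n))) atTop (𝓝 L) := hAL
  -- Fatou along ρ
  have hGcont : ∀ n, Continuous (G n) := fun n => (hGlip n).continuous
  have hFatou : A Hs ≤ L := by
    have hpt : ∀ z : ℝ, ENNReal.ofReal (a / 2 * Hs z ^ 2 + Hs z)
        = liminf (fun n => ENNReal.ofReal (a / 2 * G (ρ n) z ^ 2 + G (ρ n) z)) atTop := by
      intro z
      refine (Filter.Tendsto.liminf_eq ?_).symm
      exact (ENNReal.continuous_ofReal.tendsto _).comp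
        ((tendsto_const_nhds.mul ((hconvρ z).pow 2)).add (hconvρ z))
    have h1 : A Hs = ∫⁻ z in Set.Ioi (0:ℝ),
        liminf (fun n => ENNReal.ofReal (a / 2 * G (ρ n) z ^ 2 + G (ρ n) z)) atTop
          ∂F.measure := by
      rw [hA]
      exact lintegral_congr fun z => hpt z
    rw [h1, ← hALρ.liminf_eq]
    refine lintegral_liminf_le' fun n => ?_
    exact (ENNReal.continuous_ofReal.comp
      ((continuous_const.mul ((hGcont (ρ n)).pow 2)).add (hGcont (ρ n)))).measurable.aemeasurable
  -- dominated convergence for the second term along ρ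
  have hBtend : Tendsto (fun n => Bf (G (ρ n))) atTop (𝓝 (Bf Hs)) := by
    rw [hB]
    refine ENNReal.Tendsto.const_mul ?_ (Or.inr ENNReal.ofReal_ne_top)
    refine tendsto_lintegral_of_dominated_convergence (fun z => ENNReal.ofReal z)
      (fun n => (ENNReal.continuous_ofReal.comp (hGcont (ρ n))).measurable) ?_ ?_ ?_
    · intro n
      exact (ae_restrict_iff' measurableSet_Ioi).2 (ae_of_all _ fun z hz =>
        ENNReal.ofReal_le_ofReal (adm_le (hGmem (ρ n)) (le_of_lt hz)))
    · exact hMne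
    · exact ae_of_all _ fun z => (ENNReal.continuous_ofReal.tendsto _).comp (hconvρ z)
  -- finiteness of each A (G (ρ n))
  have hboundJ : ∀ n, Jfun F.measure Fhat.measure θ a (G (ρ n))
      < ((vr + 1 / (n + 1) : ℝ) : EReal) := by
    intro n
    rw [hGJ]
    refine lt_of_lt_of_le (hH0lt (ρ n)) ?_
    rw [EReal.coe_le_coe_iff]
    have hle : (n : ℝ) + 1 ≤ (ρ n : ℝ) + 1 := by
      have h1 : n ≤ ρ n := le_trans (hψ.le_apply) (hφ.le_apply)
      have h2 : (n:ℝ) ≤ (ρ n : ℝ) := Nat.cast_le.mpr h1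
      linarith
    have := one_div_le_one_div_of_le (by positivity : (0:ℝ) < (n:ℝ) + 1) hle
    linarith
  have hAfin : ∀ n, A (G (ρ n)) ≠ ⊤ := by
    intro n h
    have := hboundJ n
    rw [hJ, h] at this
    rw [ereal_coe_ennreal_eq (hBne _ (hGmem (ρ n)))] at this
    rw [EReal.coe_ennreal_top, EReal.top_sub_coe] at this
    exact (not_top_lt) this
  -- L is finite
  have hK0 : ∀ n, A (G (ρ n)) ≤ ENNReal.ofReal (vr + 1 + (c * M).toReal) := by
    intro n
    have hb := hboundJ n
    rw [hJ, ereal_sub_coe (hAfin n) (hBne _ (hGmem (ρ n))), EReal.coe_lt_coe_iff] at hb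
    have h1 : (Bf (G (ρ n))).toReal ≤ (c * M).toReal :=
      ENNReal.toReal_mono hcM (hBle _ (hGmem (ρ n)))
    have h2 : 1 / ((n : ℝ) + 1) ≤ 1 := by
      rw [div_le_one (by positivity)]; linarith [Nat.cast_nonneg (α := ℝ) n]
    have h3 : (A (G (ρ n))).toReal ≤ vr + 1 + (c * M).toReal := by linarith
    calc A (G (ρ n)) = ENNReal.ofReal (A (G (ρ n))).toReal :=
          (ENNReal.ofReal_toReal (hAfin n)).symm
      _ ≤ _ := ENNReal.ofReal_le_ofReal h3
  have hLne : L ≠ ⊤ := by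
    have : L ≤ ENNReal.ofReal (vr + 1 + (c * M).toReal) :=
      le_of_tendsto hALρ (Eventually.of_forall hK0)
    exact ne_top_of_le_ne_top ENNReal.ofReal_ne_top this
  -- pass to real limits
  have hAr : Tendsto (fun n => (A (G (ρ n))).toReal) atTop (𝓝 L.toReal) :=
    (ENNReal.tendsto_toReal hLne).comp hALρ
  have hBr : Tendsto (fun n => (Bf (G (ρ n))).toReal) atTop (𝓝 (Bf Hs).toReal) :=
    (ENNReal.tendsto_toReal (hBne _ hHsAdm)).comp hBtend
  have hlim : L.toReal - (Bf Hs).toReal ≤ vr := by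
    have hbound : ∀ n, (A (G (ρ n))).toReal - (Bf (G (ρ n))).toReal ≤ vr + 1 / (n + 1) := by
      intro n
      have hb := hboundJ n
      rw [hJ, ereal_sub_coe (hAfin n) (hBne _ (hGmem (ρ n))), EReal.coe_lt_coe_iff] at hb
      linarith
    refine le_of_tendsto_of_tendsto' (hAr.sub hBr) ?_ hbound
    have : Tendsto (fun n : ℕ => 1 / ((n : ℝ) + 1)) atTop (𝓝 0) :=
      tendsto_one_div_add_atTop_nhds_zero_nat
    simpa using tendsto_const_nhds.add this
  -- conclude
  have hAHsne : A Hs ≠ ⊤ := ne_top_of_le_ne_top hLne hFatou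
  have hJHs : Jfun F.measure Fhat.measure θ a Hs ≤ v := by
    rw [hJ, ereal_sub_coe hAHsne (hBne _ hHsAdm), ← hvr, EReal.coe_le_coe_iff]
    have := ENNReal.toReal_mono hLne hFatou
    linarith
  have hvleJ : ∀ H ∈ Adm, v ≤ Jfun F.measure Fhat.measure θ a H := by
    intro H hH
    rw [hv, vfun]
    exact iInf₂_le H hH
  refine ⟨Hs, hHsAdm, le_antisymm hJHs (hvleJ Hs hHsAdm), fun H hH => le_trans hJHs (hvleJ H hH)⟩
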